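/- arXiv:2204.10991 — 3 statements merged into one kernel-verified Lean document; each statement's English description precedes it below -/
import Mathlib

section
/- Let 𝒜 be the structure with underlying set ω × ℚ in the language with a binary relation symbol E and a binary relation symbol ≺, where E((i,p),(j,q)) holds iff i = j, and (i,p) ≺ (j,q) holds iff i < j or (i = j and p < q) (so 𝒜 is a convexly ordered equivalence relation with infinitely many classes, each densely ordered). Let ℬ be the structure with underlying set ℚ^{<ω} (finite sequences of rationals) in the language with binary relation symbols ⊴, <_lex, <_len and a binary function symbol ∧, where: η ⊴ ν iff η is an initial segment of ν; η ∧ ν is the longest common initial segment of η and ν; η <_lex ν iff either η is a proper initial segment of ν, or η(k) < ν(k) where k is the length of η ∧ ν; and η <_len ν iff the length of η is less than the length of ν. Then 𝒜 is a semi-retract of ℬ. -/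
open FirstOrder FirstOrder.Language

/-- Two same-length tuples have the same quantifier-free type over ∅. -/
def SameQfType (L : FirstOrder.Language) (M : Type*) [L.Structure M] {n : ℕ}
    (x y : Fin n → M) : Prop :=
  ∀ φ : L.Formula (Fin n), φ.IsQF → (φ.Realize x ↔ φ.Realize y)

/-- A qftp-respecting injection between structures in possibly different languages. -/
def QftpRespecting (L L' : FirstOrder.Language) (M N : Type*) [L.Structure M] [L'.Structure N]
    (h : M → N) : Prop :=
  Function.Injective h ∧
    ∀ (n : ℕ) (x y : Fin n → M), SameQfType L M x y → SameQfType L' N (h ∘ x) (h ∘ y)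

/-- `(g, f)` is a semi-retraction between `M` and `N`: both maps are qftp-respecting
injections and `f ∘ g` is qftp-preserving (equivalently, an `L`-embedding of `M` into `M`). -/
def IsSemiRetraction (L L' : FirstOrder.Language) (M N : Type*)
    [L.Structure M] [L'.Structure N] (g : M → N) (f : N → M) : Prop :=
  QftpRespecting L L' M N g ∧ QftpRespecting L' L N M f ∧
    ∀ (n : ℕ) (x : Fin n → M), SameQfType L M x (f ∘ g ∘ x)

/-- `M` is locally finite: every finitely generated substructure is finite. -/
def StructLocallyFinite (L : FirstOrder.Language) (M : Type*) [L.Structure M] : Prop :=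
  ∀ S : L.Substructure M, S.FG → (S : Set M).Finite

/-- `M → (B)^A_{r,d}` for substructures. -/
def ArrowSub (L : FirstOrder.Language) (M : Type*) [L.Structure M]
    (A B : L.Substructure M) (r d : ℕ) : Prop :=
  ∀ c : L.Substructure M → Fin r, ∃ B' : L.Substructure M,
    Nonempty (B' ≃[L] B) ∧
      (c '' {A' : L.Substructure M | A' ≤ B' ∧ Nonempty (A' ≃[L] A)}).ncard ≤ d

/-- `M →ᵉ (B)^A_{r,d}` for embeddings. -/
def ArrowEmb (L : FirstOrder.Language) (M : Type*) [L.Structure M]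
    (A B : L.Substructure M) (r d : ℕ) : Prop :=
  ∀ c : (A ↪[L] M) → Fin r, ∃ h : B ↪[L] M,
    (c '' {j : A ↪[L] M | ∃ e : A ↪[L] B, j = h.comp e}).ncard ≤ d

/-- A structure is rigid if its only automorphism is the identity. -/
def IsRigidStructure (L : FirstOrder.Language) (M : Type*) [L.Structure M] : Prop :=
  ∀ σ : M ≃[L] M, ∀ x : M, σ x = x


/-- The relation symbols of the language of convexly ordered equivalence relations:
`E` (equivalence) and `≺` (order), both binary. -/
inductive ConvRel : ℕ → Type
  | eqv : ConvRel 2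
  | prec : ConvRel 2

/-- The language `{E, ≺}` of convexly ordered equivalence relations. -/
def Lconv : FirstOrder.Language :=
  ⟨fun _ => Empty, ConvRel⟩

/-- The structure `𝒜` on `ω × ℚ`: `E((i,p),(j,q))` iff `i = j`, and `(i,p) ≺ (j,q)` iff
`i < j` or (`i = j` and `p < q`), a convexly ordered equivalence relation with infinitely many
classes, each densely ordered. -/
def convStructure : Lconv.Structure (ℕ × ℚ) where
  funMap {n} f _ := f.elim
  RelMap {n} r x :=
    match r with
    | .eqv => (x 0).1 = (x 1).1
    | .prec => (x 0).1 < (x 1).1 ∨ ((x 0).1 = (x 1).1 ∧ (x 0).2 < (x 1).2)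

/-- The function symbol of the tree language: the binary meet `∧`. -/
inductive TreeFunc : ℕ → Type
  | meet : TreeFunc 2

/-- The relation symbols of the tree language: `⊴` (initial segment), `<_lex` and `<_len`. -/
inductive TreeRel : ℕ → Type
  | init : TreeRel 2
  | lex : TreeRel 2
  | len : TreeRel 2

/-- The language `{⊴, ∧, <_lex, <_len}` of strong trees. -/
def Ltree : FirstOrder.Language :=
  ⟨TreeFunc, TreeRel⟩

/-- The longest common initial segment of two finite sequences. -/
def listMeet : List ℚ → List ℚ → List ℚ
  | a :: as, b :: bs => if a = b then a :: listMeet as bs else []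
  | _, _ => []

/-- The structure `ℬ` on `ℚ^{<ω}`: `η ⊴ ν` iff `η` is an initial segment of `ν`; `η ∧ ν` is the
longest common initial segment; `η <_lex ν` iff `η` is a proper initial segment of `ν` or
`η(k) < ν(k)` where `k` is the length of `η ∧ ν`; `η <_len ν` iff `η` is shorter than `ν`. -/
def treeStructure : Ltree.Structure (List ℚ) where
  funMap {n} f x := match f with | .meet => listMeet (x 0) (x 1)
  RelMap {n} r x :=
    match r with
    | .init => (x 0) <+: (x 1)
    | .lex => ((x 0) <+: (x 1) ∧ x 0 ≠ x 1) ∨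
        ∃ u v : ℚ, (x 0)[(listMeet (x 0) (x 1)).length]? = some u ∧
          (x 1)[(listMeet (x 0) (x 1)).length]? = some v ∧ u < v
    | .len => (x 0).length < (x 1).length

/-! ### Auxiliary development for the semi-retraction theorem -/

namespace SemiRetractAux

open List

attribute [local instance] convStructure treeStructure

/-- A squashing map `ℚ → (-1, 1)`. -/
noncomputable def sR (q : ℚ) : ℚ := q / (1 + |q|)

lemma sR_strictMono : StrictMono sR := by
  intro a b hab
  have ha : (0:ℚ) < 1 + |a| := by positivity
  have hb : (0:ℚ) < 1 + |b| := by positivity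
  rw [sR, sR, div_lt_div_iff₀ ha hb]
  rcases abs_cases a with ⟨h1, h2⟩ | ⟨h1, h2⟩ <;> rcases abs_cases b with ⟨h3, h4⟩ | ⟨h3, h4⟩ <;>
    rw [h1, h3] <;> nlinarith

lemma sR_lt_two (q : ℚ) : sR q < 2 := by
  have h : (0:ℚ) < 1 + |q| := by positivity
  rw [sR, div_lt_iff₀ h]
  have h1 := le_abs_self q
  have h2 := abs_nonneg q
  nlinarith

lemma sR_ne_two (q : ℚ) : sR q ≠ 2 := ne_of_lt (sR_lt_two q)

/-- The all-2's part for a class. -/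
def rep (u : ℕ × ℚ) : List ℚ := List.replicate (2 * u.1) 2

/-- The embedding of `ℕ × ℚ` into `ℚ^{<ω}`. -/
noncomputable def gg (u : ℕ × ℚ) : List ℚ := rep u ++ [sR u.2]

@[simp] lemma rep_length (u : ℕ × ℚ) : (rep u).length = 2 * u.1 := by simp [rep]

@[simp] lemma gg_length (u : ℕ × ℚ) : (gg u).length = 2 * u.1 + 1 := by simp [gg]

/-! ### listMeet computations -/

lemma listMeet_nil_left (l : List ℚ) : listMeet [] l = [] := by cases l <;> rfl

lemma listMeet_nil_right (l : List ℚ) : listMeet l [] = [] := by cases l <;> rfl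

lemma listMeet_cons_cons (a b : ℚ) (as bs : List ℚ) :
    listMeet (a :: as) (b :: bs) = if a = b then a :: listMeet as bs else [] := rfl

lemma listMeet_comm : ∀ l1 l2 : List ℚ, listMeet l1 l2 = listMeet l2 l1
  | [], l2 => by rw [listMeet_nil_left, listMeet_nil_right]
  | a :: as, [] => by rw [listMeet_nil_left, listMeet_nil_right]
  | a :: as, b :: bs => by
    rw [listMeet_cons_cons, listMeet_cons_cons, listMeet_comm as bs]
    by_cases h : a = b
    · subst h; simp
    · simp [h, Ne.symm h]

lemma listMeet_of_prefix : ∀ {l1 l2 : List ℚ}, l1 <+: l2 → listMeet l1 l2 = l1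
  | [], l2, _ => listMeet_nil_left l2
  | a :: as, l2, h => by
    obtain ⟨t, rfl⟩ := h
    rw [cons_append, listMeet_cons_cons, if_pos rfl,
      listMeet_of_prefix (List.prefix_append as t)]

lemma listMeet_diff : ∀ (c : List ℚ) {a b : ℚ} (t1 t2 : List ℚ), a ≠ b →
    listMeet (c ++ a :: t1) (c ++ b :: t2) = c
  | [], a, b, t1, t2, h => by simp [listMeet_cons_cons, h]
  | x :: c, a, b, t1, t2, h => by
    rw [cons_append, cons_append, listMeet_cons_cons, if_pos rfl, listMeet_diff c t1 t2 h]

lemma rep_prefix {u v : ℕ × ℚ} (h : u.1 ≤ v.1) : rep u <+: rep v := by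
  refine ⟨List.replicate (2 * v.1 - 2 * u.1) 2, ?_⟩
  rw [rep, rep, ← List.replicate_add]
  congr 1
  omega

lemma rep_decomp {u v : ℕ × ℚ} (h : u.1 < v.1) :
    rep v = rep u ++ (2 : ℚ) :: List.replicate (2 * v.1 - 2 * u.1 - 1) 2 := by
  have h1 : (2 : ℚ) :: List.replicate (2 * v.1 - 2 * u.1 - 1) 2
      = List.replicate (2 * v.1 - 2 * u.1) 2 := by
    rw [← List.replicate_succ]
    congr 1
    omega
  rw [h1, rep, rep, ← List.replicate_add]
  congr 1
  omega

lemma meet_gg_gg_self (u : ℕ × ℚ) : listMeet (gg u) (gg u) = gg u :=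
  listMeet_of_prefix (List.prefix_refl _)

lemma meet_gg_gg_sameclass {u v : ℕ × ℚ} (h1 : u.1 = v.1) (h2 : u.2 ≠ v.2) :
    listMeet (gg u) (gg v) = rep u := by
  have hr : rep v = rep u := by rw [rep, rep, h1]
  rw [gg, gg, hr]
  exact listMeet_diff _ _ _ fun hc => h2 (sR_strictMono.injective hc)

lemma meet_gg_gg_lt {u v : ℕ × ℚ} (h : u.1 < v.1) : listMeet (gg u) (gg v) = rep u := by
  rw [gg, gg, rep_decomp h, List.append_assoc, List.cons_append]
  exact listMeet_diff _ _ _ (sR_ne_two u.2)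

lemma meet_gg_rep_lt {u v : ℕ × ℚ} (h : u.1 < v.1) : listMeet (gg u) (rep v) = rep u := by
  rw [gg, rep_decomp h]
  exact listMeet_diff _ _ _ (sR_ne_two u.2)

lemma meet_gg_rep_ge {u v : ℕ × ℚ} (h : v.1 ≤ u.1) : listMeet (gg u) (rep v) = rep v := by
  rw [listMeet_comm]
  exact listMeet_of_prefix ((rep_prefix h).trans (by rw [gg]; exact List.prefix_append _ _))

lemma meet_rep_rep {u v : ℕ × ℚ} (h : u.1 ≤ v.1) : listMeet (rep u) (rep v) = rep u :=
  listMeet_of_prefix (rep_prefix h)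

/-! ### entries -/

lemma rep_getElem {u : ℕ × ℚ} {k : ℕ} (h : k < 2 * u.1) : (rep u)[k]? = some 2 := by
  simp [rep, List.getElem?_replicate, h]

lemma rep_getElem_none (u : ℕ × ℚ) : (rep u)[2 * u.1]? = none :=
  List.getElem?_eq_none (by simp)

lemma gg_getElem_mid {u : ℕ × ℚ} {k : ℕ} (h : k < 2 * u.1) : (gg u)[k]? = some 2 := by
  rw [gg, List.getElem?_append_left (by simpa using h)]
  exact rep_getElem h

lemma gg_getElem_last (u : ℕ × ℚ) : (gg u)[2 * u.1]? = some (sR u.2) := by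
  have := List.getElem?_concat_length (l := rep u) (a := sR u.2)
  rwa [rep_length] at this

lemma gg_getElem_none (u : ℕ × ℚ) : (gg u)[2 * u.1 + 1]? = none :=
  List.getElem?_eq_none (by simp)

/-! ### equality and prefix facts -/

lemma prefix_getElem? {l1 l2 : List ℚ} (h : l1 <+: l2) {n : ℕ} {a : ℚ}
    (ha : l1[n]? = some a) : l2[n]? = some a := by
  obtain ⟨t, rfl⟩ := h
  rwa [List.getElem?_append_left ((List.getElem?_eq_some_iff.mp ha).1)]

lemma gg_inj : Function.Injective gg := by
  intro u v h
  have hlen : 2 * u.1 + 1 = 2 * v.1 + 1 := by rw [← gg_length u, ← gg_length v, h]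
  have h1 : u.1 = v.1 := by omega
  have hr : rep u = rep v := by rw [rep, rep, h1]
  rw [gg, gg] at h
  obtain ⟨-, h2⟩ := List.append_inj h (by rw [hr])
  have h3 : sR u.2 = sR v.2 := by injection h2
  exact Prod.ext h1 (sR_strictMono.injective h3)

lemma gg_ne_rep (u v : ℕ × ℚ) : gg u ≠ rep v := by
  intro h
  have := congrArg List.length h
  rw [gg_length, rep_length] at this
  omega

lemma rep_eq_iff {u v : ℕ × ℚ} : rep u = rep v ↔ u.1 = v.1 := by
  constructor
  · intro h
    have := congrArg List.length h
    rw [rep_length, rep_length] at this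
    omega
  · intro h; rw [rep, rep, h]

lemma gg_prefix_gg {u v : ℕ × ℚ} : gg u <+: gg v ↔ u = v := by
  constructor
  · intro h
    by_cases h1 : u.1 = v.1
    · exact gg_inj (h.eq_of_length_le (by rw [gg_length, gg_length]; omega))
    · exfalso
      have hlen := h.length_le
      rw [gg_length, gg_length] at hlen
      have hlt : u.1 < v.1 := by omega
      have e1 := prefix_getElem? h (gg_getElem_last u)
      rw [gg_getElem_mid (by omega)] at e1
      exact sR_ne_two u.2 (Option.some.inj e1).symm
  · rintro rfl; exact List.prefix_refl _

lemma not_gg_prefix_rep (u v : ℕ × ℚ) : ¬ gg u <+: rep v := by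
  intro h
  have hlen := h.length_le
  rw [gg_length, rep_length] at hlen
  have e1 := prefix_getElem? h (gg_getElem_last u)
  rw [rep_getElem (by omega)] at e1
  exact sR_ne_two u.2 (Option.some.inj e1).symm

lemma rep_prefix_gg {u v : ℕ × ℚ} : rep u <+: gg v ↔ u.1 ≤ v.1 := by
  constructor
  · intro h
    have := h.length_le
    rw [rep_length, gg_length] at this
    omega
  · intro h
    exact (rep_prefix h).trans (List.prefix_append _ _)

lemma rep_prefix_rep {u v : ℕ × ℚ} : rep u <+: rep v ↔ u.1 ≤ v.1 := by
  constructor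
  · intro h
    have := h.length_le
    rw [rep_length, rep_length] at this
    omega
  · exact rep_prefix

/-! ### the lex relation -/

/-- The semantic lexicographic relation of `treeStructure`. -/
def lexRel (l1 l2 : List ℚ) : Prop :=
  (l1 <+: l2 ∧ l1 ≠ l2) ∨
    ∃ u v : ℚ, l1[(listMeet l1 l2).length]? = some u ∧
      l2[(listMeet l1 l2).length]? = some v ∧ u < v

lemma exists_some_iff {l1 l2 : List ℚ} {k : ℕ} {c d : ℚ} (h1 : l1[k]? = some c)
    (h2 : l2[k]? = some d) :
    (∃ u v : ℚ, l1[k]? = some u ∧ l2[k]? = some v ∧ u < v) ↔ c < d := by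
  constructor
  · rintro ⟨a, b, e1, e2, hab⟩
    rw [h1] at e1
    rw [h2] at e2
    cases Option.some.inj e1
    cases Option.some.inj e2
    exact hab
  · intro h; exact ⟨c, d, h1, h2, h⟩

lemma exists_some_none_left {l1 l2 : List ℚ} {k : ℕ} (h : l1[k]? = none) :
    ¬ ∃ u v : ℚ, l1[k]? = some u ∧ l2[k]? = some v ∧ u < v := by
  rintro ⟨a, b, e1, -, -⟩
  rw [h] at e1
  cases e1

lemma exists_some_none_right {l1 l2 : List ℚ} {k : ℕ} (h : l2[k]? = none) :
    ¬ ∃ u v : ℚ, l1[k]? = some u ∧ l2[k]? = some v ∧ u < v := by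
  rintro ⟨a, b, -, e2, -⟩
  rw [h] at e2
  cases e2

/-- The convex-order relation of `convStructure`. -/
def cPrec (u v : ℕ × ℚ) : Prop := u.1 < v.1 ∨ (u.1 = v.1 ∧ u.2 < v.2)

lemma lexRel_gg_gg {u v : ℕ × ℚ} : lexRel (gg u) (gg v) ↔ cPrec u v := by
  rcases lt_trichotomy u.1 v.1 with h | h | h
  · apply iff_of_true
    · refine Or.inr ?_
      rw [meet_gg_gg_lt h, rep_length]
      exact ⟨sR u.2, 2, gg_getElem_last u, gg_getElem_mid (by omega), sR_lt_two u.2⟩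
    · exact Or.inl h
  · by_cases h2 : u.2 = v.2
    · have huv : u = v := Prod.ext h h2
      subst huv
      apply iff_of_false
      · rintro (⟨-, hne⟩ | hex)
        · exact hne rfl
        · rw [meet_gg_gg_self, show (gg u).length = 2 * u.1 + 1 from gg_length u] at hex
          exact exists_some_none_left (gg_getElem_none u) hex
      · rintro (h | ⟨-, h⟩) <;> exact lt_irrefl _ h
    · have hm2 : (gg v)[2 * u.1]? = some (sR v.2) := by
        rw [show 2 * u.1 = 2 * v.1 by omega]; exact gg_getElem_last v
      rw [lexRel, meet_gg_gg_sameclass h h2, rep_length,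
        exists_some_iff (gg_getElem_last u) hm2, cPrec]
      constructor
      · rintro (⟨hp, -⟩ | hlt)
        · exact absurd (gg_prefix_gg.mp hp) fun e => h2 (by rw [e])
        · exact Or.inr ⟨h, sR_strictMono.lt_iff_lt.mp hlt⟩
      · rintro (hlt | ⟨-, hlt⟩)
        · omega
        · exact Or.inr (sR_strictMono hlt)
  · apply iff_of_false
    · have hm : listMeet (gg u) (gg v) = rep v := by
        rw [listMeet_comm]; exact meet_gg_gg_lt h
      rintro (⟨hp, -⟩ | hex)
      · have := gg_prefix_gg.mp hp
        rw [this] at h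
        exact lt_irrefl _ h
      · rw [hm, rep_length,
          exists_some_iff (gg_getElem_mid (by omega)) (gg_getElem_last v)] at hex
        exact absurd hex (not_lt.mpr (sR_lt_two v.2).le)
    · rintro (hl | ⟨he, -⟩) <;> omega

lemma lexRel_gg_rep {u v : ℕ × ℚ} : lexRel (gg u) (rep v) ↔ u.1 < v.1 := by
  by_cases h : u.1 < v.1
  · apply iff_of_true _ h
    refine Or.inr ?_
    rw [meet_gg_rep_lt h, rep_length]
    exact ⟨sR u.2, 2, gg_getElem_last u, rep_getElem (by omega), sR_lt_two u.2⟩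
  · apply iff_of_false _ h
    rintro (⟨hp, -⟩ | hex)
    · exact not_gg_prefix_rep u v hp
    · rw [meet_gg_rep_ge (by omega), rep_length] at hex
      exact exists_some_none_right (rep_getElem_none v) hex

lemma lexRel_rep_gg {u v : ℕ × ℚ} : lexRel (rep u) (gg v) ↔ u.1 ≤ v.1 := by
  by_cases h : u.1 ≤ v.1
  · apply iff_of_true _ h
    exact Or.inl ⟨rep_prefix_gg.mpr h, fun e => gg_ne_rep v u e.symm⟩
  · apply iff_of_false _ h
    have hm : listMeet (rep u) (gg v) = rep v := by
      rw [listMeet_comm]; exact meet_gg_rep_lt (by omega)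
    rintro (⟨hp, -⟩ | hex)
    · exact h (rep_prefix_gg.mp hp)
    · rw [hm, rep_length,
        exists_some_iff (rep_getElem (by omega)) (gg_getElem_last v)] at hex
      exact absurd hex (not_lt.mpr (sR_lt_two v.2).le)

lemma lexRel_rep_rep {u v : ℕ × ℚ} : lexRel (rep u) (rep v) ↔ u.1 < v.1 := by
  by_cases h : u.1 < v.1
  · apply iff_of_true _ h
    refine Or.inl ⟨rep_prefix_rep.mpr h.le, ?_⟩
    intro e
    rw [rep_eq_iff] at e
    omega
  · apply iff_of_false _ h
    have hm : listMeet (rep u) (rep v) = rep v := by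
      rw [listMeet_comm]; exact meet_rep_rep (by omega)
    rintro (⟨hp, hne⟩ | hex)
    · rw [rep_prefix_rep] at hp
      exact hne (rep_eq_iff.mpr (by omega))
    · rw [hm, rep_length] at hex
      exact exists_some_none_right (rep_getElem_none v) hex


/-! ### the lex relation vs the list order -/

lemma lex_iff_lexRel : ∀ {l1 l2 : List ℚ}, l1.length = l2.length →
    (List.Lex (· < ·) l1 l2 ↔ lexRel l1 l2)
  | [], [], _ => by
    apply iff_of_false
    · exact List.not_lex_nil
    · rintro (⟨-, hne⟩ | hex)
      · exact hne rfl
      · exact exists_some_none_left (by simp) hex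
  | [], b :: bs, h => by simp at h
  | a :: as, [], h => by simp at h
  | a :: as, b :: bs, h => by
    by_cases hab : a = b
    · subst hab
      have hlen : as.length = bs.length := by simpa using h
      rw [List.lex_cons_iff, lex_iff_lexRel hlen]
      unfold lexRel
      rw [listMeet_cons_cons, if_pos rfl]
      simp only [List.length_cons, List.getElem?_cons_succ, List.cons_prefix_cons,
        true_and, ne_eq, List.cons.injEq]
      try tauto
    · constructor
      · intro hl
        cases hl with
        | cons h' => exact absurd rfl hab
        | rel h' =>
          refine Or.inr ?_
          rw [listMeet_cons_cons, if_neg hab]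
          exact ⟨a, b, by simp, by simp, h'⟩
      · rintro (⟨hp, -⟩ | hex)
        · rw [List.cons_prefix_cons] at hp
          exact absurd hp.1 hab
        · rw [listMeet_cons_cons, if_neg hab] at hex
          simp only [List.length_nil, List.getElem?_cons_zero, Option.some.injEq] at hex
          obtain ⟨u, v, rfl, rfl, huv⟩ := hex
          exact List.Lex.rel huv

/-! ### the map back -/

/-- An order embedding of the lexicographic order on lists into `ℚ`. -/
noncomputable def emb : List ℚ ↪o ℚ :=
  (Order.embedding_from_countable_to_dense (List ℚ) ℚ).some

/-- The map from `ℚ^{<ω}` back to `ℕ × ℚ`. -/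
noncomputable def ff (l : List ℚ) : ℕ × ℚ := (l.length, emb l)

lemma ff_inj : Function.Injective ff := fun _ _ h =>
  emb.injective (congrArg Prod.snd h)

lemma emb_lt_iff {l1 l2 : List ℚ} (h : l1.length = l2.length) :
    emb l1 < emb l2 ↔ lexRel l1 l2 := by
  rw [OrderEmbedding.lt_iff_lt]
  exact (lex_iff_lexRel h : List.Lex (· < ·) l1 l2 ↔ lexRel l1 l2)

/-! ### generic formula lemmas -/

lemma sameQfType_of_atomic {L : FirstOrder.Language} {M : Type*} [L.Structure M] {n : ℕ}
    {x y : Fin n → M}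
    (h : ∀ φ : L.Formula (Fin n), φ.IsAtomic → (φ.Realize x ↔ φ.Realize y)) :
    SameQfType L M x y := by
  intro φ hφ
  induction hφ with
  | falsum => exact Iff.rfl
  | of_isAtomic h' => exact h _ h'
  | imp h1 h2 ih1 ih2 =>
    simp only [Formula.Realize, BoundedFormula.realize_imp] at *
    exact imp_congr ih1 ih2

/-! ### extraction of atomic facts from `SameQfType` -/

section Extract

variable {L : FirstOrder.Language} {M : Type*} [L.Structure M] {n : ℕ}

lemma sameQfType_var_eq {x y : Fin n → M} (h : SameQfType L M x y) (a b : Fin n) :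
    x a = x b ↔ y a = y b := by
  have := h (BoundedFormula.equal (Term.var (Sum.inl a)) (Term.var (Sum.inl b)))
    (BoundedFormula.IsAtomic.equal _ _).isQF
  exact this

lemma sameQfType_var_rel {x y : Fin n → M} (h : SameQfType L M x y) (R : L.Relations 2)
    (a b : Fin n) :
    Structure.RelMap R (fun i : Fin 2 => x (if i = 0 then a else b))
      ↔ Structure.RelMap R (fun i : Fin 2 => y (if i = 0 then a else b)) :=
  h (BoundedFormula.rel R fun i : Fin 2 => Term.var (Sum.inl (if i = 0 then a else b)))
    (BoundedFormula.IsAtomic.rel _ _).isQF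

end Extract


/-! ### conv-side: quantifier-free types from atomic data -/

lemma convTerm_eq_var {α : Type*} (t : Lconv.Term α) : ∃ a, t = Term.var a := by
  cases t with
  | var a => exact ⟨a, rfl⟩
  | func f ts => exact Empty.elim f

lemma conv_sameQfType_of {n : ℕ} {x y : Fin n → ℕ × ℚ}
    (Hq : ∀ a b, x a = x b ↔ y a = y b)
    (HE : ∀ a b, (x a).1 = (x b).1 ↔ (y a).1 = (y b).1)
    (HP : ∀ a b, cPrec (x a) (x b) ↔ cPrec (y a) (y b)) :
    SameQfType Lconv (ℕ × ℚ) x y := by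
  apply sameQfType_of_atomic
  intro φ hφ
  have main : ∀ xs : Fin 0 → ℕ × ℚ,
      (BoundedFormula.Realize φ x xs ↔ BoundedFormula.Realize φ y xs) := by
    intro xs
    cases hφ with
    | equal t1 t2 =>
      obtain ⟨a', ha⟩ := convTerm_eq_var t1
      obtain ⟨b', hb⟩ := convTerm_eq_var t2
      show Term.realize (Sum.elim x xs) t1 = Term.realize (Sum.elim x xs) t2
        ↔ Term.realize (Sum.elim y xs) t1 = Term.realize (Sum.elim y xs) t2
      rw [ha, hb]
      cases a' with
      | inr i => exact i.elim0
      | inl a =>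
        cases b' with
        | inr i => exact i.elim0
        | inl b =>
          simp only [Term.realize_var, Sum.elim_inl]
          exact Hq a b
    | rel R ts =>
      cases R with
      | eqv =>
        obtain ⟨a', ha⟩ := convTerm_eq_var (ts 0)
        obtain ⟨b', hb⟩ := convTerm_eq_var (ts 1)
        show (Term.realize (Sum.elim x xs) (ts 0)).1 = (Term.realize (Sum.elim x xs) (ts 1)).1
          ↔ (Term.realize (Sum.elim y xs) (ts 0)).1 = (Term.realize (Sum.elim y xs) (ts 1)).1
        rw [ha, hb]
        cases a' with
        | inr i => exact i.elim0
        | inl a =>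
          cases b' with
          | inr i => exact i.elim0
          | inl b =>
            simp only [Term.realize_var, Sum.elim_inl]
            exact HE a b
      | prec =>
        obtain ⟨a', ha⟩ := convTerm_eq_var (ts 0)
        obtain ⟨b', hb⟩ := convTerm_eq_var (ts 1)
        show cPrec (Term.realize (Sum.elim x xs) (ts 0)) (Term.realize (Sum.elim x xs) (ts 1))
          ↔ cPrec (Term.realize (Sum.elim y xs) (ts 0)) (Term.realize (Sum.elim y xs) (ts 1))
        rw [ha, hb]
        cases a' with
        | inr i => exact i.elim0
        | inl a =>
          cases b' with
          | inr i => exact i.elim0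
          | inl b =>
            simp only [Term.realize_var, Sum.elim_inl]
            exact HP a b
  exact main _

/-! ### tree-side: values of terms over the image of `gg` -/

/-- Symbolic values of tree terms over a tuple from the image of `gg`. -/
noncomputable def VV {n : ℕ} (x : Fin n → ℕ × ℚ) : Fin n ⊕ Fin n → List ℚ :=
  Sum.elim (fun a => gg (x a)) (fun a => rep (x a))

lemma meet_VV {n : ℕ} {x y : Fin n → ℕ × ℚ}
    (Hq : ∀ a b, x a = x b ↔ y a = y b)
    (HE : ∀ a b, (x a).1 = (x b).1 ↔ (y a).1 = (y b).1)
    (Hlt : ∀ a b, (x a).1 < (x b).1 ↔ (y a).1 < (y b).1)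
    (s1 s2 : Fin n ⊕ Fin n) :
    ∃ s3, listMeet (VV x s1) (VV x s2) = VV x s3 ∧
      listMeet (VV y s1) (VV y s2) = VV y s3 := by
  rcases s1 with a | a <;> rcases s2 with b | b <;>
    simp only [VV, Sum.elim_inl, Sum.elim_inr]
  · by_cases h1 : x a = x b
    · refine ⟨Sum.inl a, ?_, ?_⟩ <;> simp only [VV, Sum.elim_inl]
      · rw [← h1, meet_gg_gg_self]
      · rw [← (Hq a b).mp h1, meet_gg_gg_self]
    · by_cases h2 : (x a).1 = (x b).1
      · have h2' := (HE a b).mp h2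
        refine ⟨Sum.inr a, ?_, ?_⟩ <;> simp only [VV, Sum.elim_inr]
        · exact meet_gg_gg_sameclass h2 fun hc => h1 (Prod.ext h2 hc)
        · exact meet_gg_gg_sameclass h2' fun hc =>
            h1 ((Hq a b).mpr (Prod.ext h2' hc))
      · by_cases h3 : (x a).1 < (x b).1
        · refine ⟨Sum.inr a, ?_, ?_⟩ <;> simp only [VV, Sum.elim_inr]
          · exact meet_gg_gg_lt h3
          · exact meet_gg_gg_lt ((Hlt a b).mp h3)
        · have h4 : (x b).1 < (x a).1 := by omega
          refine ⟨Sum.inr b, ?_, ?_⟩ <;> simp only [VV, Sum.elim_inr]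
          · rw [listMeet_comm]; exact meet_gg_gg_lt h4
          · rw [listMeet_comm]; exact meet_gg_gg_lt ((Hlt b a).mp h4)
  · by_cases h : (x a).1 < (x b).1
    · have h' := (Hlt a b).mp h
      refine ⟨Sum.inr a, ?_, ?_⟩ <;> simp only [VV, Sum.elim_inr]
      · exact meet_gg_rep_lt h
      · exact meet_gg_rep_lt h'
    · have h' : ¬ (y a).1 < (y b).1 := fun hh => h ((Hlt a b).mpr hh)
      refine ⟨Sum.inr b, ?_, ?_⟩ <;> simp only [VV, Sum.elim_inr]
      · exact meet_gg_rep_ge (by omega)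
      · exact meet_gg_rep_ge (by omega)
  · by_cases h : (x b).1 < (x a).1
    · have h' := (Hlt b a).mp h
      refine ⟨Sum.inr b, ?_, ?_⟩ <;> simp only [VV, Sum.elim_inr]
      · rw [listMeet_comm]; exact meet_gg_rep_lt h
      · rw [listMeet_comm]; exact meet_gg_rep_lt h'
    · have h' : ¬ (y b).1 < (y a).1 := fun hh => h ((Hlt b a).mpr hh)
      refine ⟨Sum.inr a, ?_, ?_⟩ <;> simp only [VV, Sum.elim_inr]
      · rw [listMeet_comm]; exact meet_gg_rep_ge (by omega)
      · rw [listMeet_comm]; exact meet_gg_rep_ge (by omega)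
  · by_cases h : (x a).1 ≤ (x b).1
    · have h' : (y a).1 ≤ (y b).1 := by
        have h1 := Hlt b a; omega
      refine ⟨Sum.inr a, ?_, ?_⟩ <;> simp only [VV, Sum.elim_inr]
      · exact meet_rep_rep h
      · exact meet_rep_rep h'
    · have h' : (y b).1 ≤ (y a).1 := by
        have h1 := Hlt a b; omega
      refine ⟨Sum.inr b, ?_, ?_⟩ <;> simp only [VV, Sum.elim_inr]
      · rw [listMeet_comm]; exact meet_rep_rep (by omega)
      · rw [listMeet_comm]; exact meet_rep_rep h'

lemma term_VV {n : ℕ} {x y : Fin n → ℕ × ℚ}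
    (Hq : ∀ a b, x a = x b ↔ y a = y b)
    (HE : ∀ a b, (x a).1 = (x b).1 ↔ (y a).1 = (y b).1)
    (Hlt : ∀ a b, (x a).1 < (x b).1 ↔ (y a).1 < (y b).1)
    (xs : Fin 0 → List ℚ) :
    ∀ t : Ltree.Term (Fin n ⊕ Fin 0),
      ∃ s, Term.realize (Sum.elim (fun a => gg (x a)) xs) t = VV x s ∧
        Term.realize (Sum.elim (fun a => gg (y a)) xs) t = VV y s := by
  intro t
  induction t with
  | var v =>
    cases v with
    | inl a => exact ⟨Sum.inl a, rfl, rfl⟩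
    | inr i => exact i.elim0
  | func F ts ih =>
    cases F with
    | meet =>
      obtain ⟨s0, hx0, hy0⟩ := ih 0
      obtain ⟨s1, hx1, hy1⟩ := ih 1
      obtain ⟨s3, h3x, h3y⟩ := meet_VV Hq HE Hlt s0 s1
      refine ⟨s3, ?_, ?_⟩
      · show listMeet (Term.realize (Sum.elim (fun a => gg (x a)) xs) (ts 0))
            (Term.realize (Sum.elim (fun a => gg (x a)) xs) (ts 1)) = VV x s3
        rw [hx0, hx1, h3x]
      · show listMeet (Term.realize (Sum.elim (fun a => gg (y a)) xs) (ts 0))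
            (Term.realize (Sum.elim (fun a => gg (y a)) xs) (ts 1)) = VV y s3
        rw [hy0, hy1, h3y]

lemma tree_sameQfType_of {n : ℕ} {x y : Fin n → ℕ × ℚ}
    (Hq : ∀ a b, x a = x b ↔ y a = y b)
    (HE : ∀ a b, (x a).1 = (x b).1 ↔ (y a).1 = (y b).1)
    (HP : ∀ a b, cPrec (x a) (x b) ↔ cPrec (y a) (y b)) :
    SameQfType Ltree (List ℚ) (fun a => gg (x a)) (fun a => gg (y a)) := by
  have Hlt : ∀ a b, (x a).1 < (x b).1 ↔ (y a).1 < (y b).1 := by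
    intro a b
    have h1 := HE a b
    have h2 := HP a b
    simp only [cPrec] at h2
    constructor
    · intro h
      rcases h2.mp (Or.inl h) with h' | ⟨h', -⟩
      · exact h'
      · have := h1.mpr h'; omega
    · intro h
      rcases h2.mpr (Or.inl h) with h' | ⟨h', -⟩
      · exact h'
      · have := h1.mp h'; omega
  apply sameQfType_of_atomic
  intro φ hφ
  have main : ∀ xs : Fin 0 → List ℚ,
      (BoundedFormula.Realize φ (fun a => gg (x a)) xs
        ↔ BoundedFormula.Realize φ (fun a => gg (y a)) xs) := by
    intro xs
    cases hφ with
    | equal t1 t2 =>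
      obtain ⟨s0, hx0, hy0⟩ := term_VV Hq HE Hlt xs t1
      obtain ⟨s1, hx1, hy1⟩ := term_VV Hq HE Hlt xs t2
      show (Term.realize (Sum.elim (fun a => gg (x a)) xs) t1
          = Term.realize (Sum.elim (fun a => gg (x a)) xs) t2)
        ↔ (Term.realize (Sum.elim (fun a => gg (y a)) xs) t1
          = Term.realize (Sum.elim (fun a => gg (y a)) xs) t2)
      rw [hx0, hx1, hy0, hy1]
      rcases s0 with a | a <;> rcases s1 with b | b <;>
        simp only [VV, Sum.elim_inl, Sum.elim_inr]
      · rw [gg_inj.eq_iff, gg_inj.eq_iff]; exact Hq a b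
      · exact iff_of_false (gg_ne_rep _ _) (gg_ne_rep _ _)
      · exact iff_of_false (fun e => gg_ne_rep _ _ e.symm) fun e => gg_ne_rep _ _ e.symm
      · rw [rep_eq_iff, rep_eq_iff]; exact HE a b
    | rel R ts =>
      cases R with
      | init =>
        obtain ⟨s0, hx0, hy0⟩ := term_VV Hq HE Hlt xs (ts 0)
        obtain ⟨s1, hx1, hy1⟩ := term_VV Hq HE Hlt xs (ts 1)
        show (Term.realize (Sum.elim (fun a => gg (x a)) xs) (ts 0)
            <+: Term.realize (Sum.elim (fun a => gg (x a)) xs) (ts 1))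
          ↔ (Term.realize (Sum.elim (fun a => gg (y a)) xs) (ts 0)
            <+: Term.realize (Sum.elim (fun a => gg (y a)) xs) (ts 1))
        rw [hx0, hx1, hy0, hy1]
        rcases s0 with a | a <;> rcases s1 with b | b <;>
          simp only [VV, Sum.elim_inl, Sum.elim_inr]
        · rw [gg_prefix_gg, gg_prefix_gg]; exact Hq a b
        · exact iff_of_false (not_gg_prefix_rep _ _) (not_gg_prefix_rep _ _)
        · rw [rep_prefix_gg, rep_prefix_gg]
          have h1 := Hlt a b; have h2 := Hlt b a; omega
        · rw [rep_prefix_rep, rep_prefix_rep]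
          have h2 := Hlt b a; omega
      | lex =>
        obtain ⟨s0, hx0, hy0⟩ := term_VV Hq HE Hlt xs (ts 0)
        obtain ⟨s1, hx1, hy1⟩ := term_VV Hq HE Hlt xs (ts 1)
        show lexRel (Term.realize (Sum.elim (fun a => gg (x a)) xs) (ts 0))
            (Term.realize (Sum.elim (fun a => gg (x a)) xs) (ts 1))
          ↔ lexRel (Term.realize (Sum.elim (fun a => gg (y a)) xs) (ts 0))
            (Term.realize (Sum.elim (fun a => gg (y a)) xs) (ts 1))
        rw [hx0, hx1, hy0, hy1]
        rcases s0 with a | a <;> rcases s1 with b | b <;>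
          simp only [VV, Sum.elim_inl, Sum.elim_inr]
        · rw [lexRel_gg_gg, lexRel_gg_gg]; exact HP a b
        · rw [lexRel_gg_rep, lexRel_gg_rep]; exact Hlt a b
        · rw [lexRel_rep_gg, lexRel_rep_gg]
          have h2 := Hlt b a; omega
        · rw [lexRel_rep_rep, lexRel_rep_rep]; exact Hlt a b
      | len =>
        obtain ⟨s0, hx0, hy0⟩ := term_VV Hq HE Hlt xs (ts 0)
        obtain ⟨s1, hx1, hy1⟩ := term_VV Hq HE Hlt xs (ts 1)
        show ((Term.realize (Sum.elim (fun a => gg (x a)) xs) (ts 0)).length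
            < (Term.realize (Sum.elim (fun a => gg (x a)) xs) (ts 1)).length)
          ↔ ((Term.realize (Sum.elim (fun a => gg (y a)) xs) (ts 0)).length
            < (Term.realize (Sum.elim (fun a => gg (y a)) xs) (ts 1)).length)
        rw [hx0, hx1, hy0, hy1]
        rcases s0 with a | a <;> rcases s1 with b | b <;>
          simp only [VV, Sum.elim_inl, Sum.elim_inr, gg_length, rep_length] <;>
          (have h1 := Hlt a b; have h2 := Hlt b a; omega)
  exact main _

/-! ### assembling the three conditions -/

lemma gg_qftp : QftpRespecting Lconv Ltree (ℕ × ℚ) (List ℚ) gg := by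
  refine ⟨gg_inj, ?_⟩
  intro n x y hxy
  exact tree_sameQfType_of (fun a b => sameQfType_var_eq hxy a b)
    (fun a b => sameQfType_var_rel hxy ConvRel.eqv a b)
    (fun a b => sameQfType_var_rel hxy ConvRel.prec a b)

lemma ff_qftp : QftpRespecting Ltree Lconv (List ℚ) (ℕ × ℚ) ff := by
  refine ⟨ff_inj, ?_⟩
  intro n x y hxy
  have Tq : ∀ a b, x a = x b ↔ y a = y b := fun a b => sameQfType_var_eq hxy a b
  have Tlen : ∀ a b : Fin n, ((x a).length < (x b).length ↔ (y a).length < (y b).length) :=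
    fun a b => sameQfType_var_rel hxy TreeRel.len a b
  have Tlex : ∀ a b : Fin n, (lexRel (x a) (x b) ↔ lexRel (y a) (y b)) :=
    fun a b => sameQfType_var_rel hxy TreeRel.lex a b
  apply conv_sameQfType_of
  · intro a b
    show ff (x a) = ff (x b) ↔ ff (y a) = ff (y b)
    rw [ff_inj.eq_iff, ff_inj.eq_iff]
    exact Tq a b
  · intro a b
    show (x a).length = (x b).length ↔ (y a).length = (y b).length
    have h1 := Tlen a b; have h2 := Tlen b a; omega
  · intro a b
    show cPrec (ff (x a)) (ff (x b)) ↔ cPrec (ff (y a)) (ff (y b))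
    have key : ∀ z w : List ℚ, cPrec (ff z) (ff w)
        ↔ (z.length < w.length ∨ (z.length = w.length ∧ emb z < emb w)) :=
      fun z w => Iff.rfl
    rw [key, key]
    constructor
    · rintro (h | ⟨h1, h2⟩)
      · exact Or.inl ((Tlen a b).mp h)
      · have h1' : (y a).length = (y b).length := by
          have e1 := Tlen a b; have e2 := Tlen b a; omega
        exact Or.inr ⟨h1', (emb_lt_iff h1').mpr ((Tlex a b).mp ((emb_lt_iff h1).mp h2))⟩
    · rintro (h | ⟨h1, h2⟩)
      · exact Or.inl ((Tlen a b).mpr h)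
      · have h1' : (x a).length = (x b).length := by
          have e1 := Tlen a b; have e2 := Tlen b a; omega
        exact Or.inr ⟨h1', (emb_lt_iff h1').mpr ((Tlex a b).mpr ((emb_lt_iff h1).mp h2))⟩

lemma third_cond {n : ℕ} (x : Fin n → ℕ × ℚ) :
    SameQfType Lconv (ℕ × ℚ) x (ff ∘ gg ∘ x) := by
  apply conv_sameQfType_of
  · intro a b
    exact ((ff_inj.comp gg_inj).eq_iff).symm
  · intro a b
    show (x a).1 = (x b).1 ↔ (gg (x a)).length = (gg (x b)).length
    rw [gg_length, gg_length]; omega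
  · intro a b
    have key : ∀ u v : ℕ × ℚ, cPrec (ff (gg u)) (ff (gg v))
        ↔ ((gg u).length < (gg v).length ∨
          ((gg u).length = (gg v).length ∧ emb (gg u) < emb (gg v))) :=
      fun u v => Iff.rfl
    show cPrec (x a) (x b) ↔ cPrec (ff (gg (x a))) (ff (gg (x b)))
    rw [key, gg_length, gg_length]
    simp only [cPrec]
    constructor
    · rintro (h | ⟨h1, h2⟩)
      · exact Or.inl (by omega)
      · refine Or.inr ⟨by omega, ?_⟩
        have hl : (gg (x a)).length = (gg (x b)).length := by
          rw [gg_length, gg_length]; omega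
        exact (emb_lt_iff hl).mpr (lexRel_gg_gg.mpr (Or.inr ⟨h1, h2⟩))
    · rintro (h | ⟨h1, h2⟩)
      · exact Or.inl (by omega)
      · have h1' : (x a).1 = (x b).1 := by omega
        have hl : (gg (x a)).length = (gg (x b)).length := by
          rw [gg_length, gg_length]; omega
        rcases lexRel_gg_gg.mp ((emb_lt_iff hl).mp h2) with h' | ⟨-, h'⟩
        · omega
        · exact Or.inr ⟨h1', h'⟩

end SemiRetractAux


/-- Proposition 3.8 / `treeprop`: the densely ordered convex equivalence
relation `𝒜` on `ω × ℚ` is a semi-retract of the strong tree `ℬ` on `ℚ^{<ω}`. -/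
theorem convEquivalence_semiRetract_of_strongTree :
    ∃ (g : ℕ × ℚ → List ℚ) (f : List ℚ → ℕ × ℚ),
      @IsSemiRetraction Lconv Ltree (ℕ × ℚ) (List ℚ) convStructure treeStructure g f :=
  ⟨SemiRetractAux.gg, SemiRetractAux.ff, SemiRetractAux.gg_qftp, SemiRetractAux.ff_qftp,
    fun _ x => SemiRetractAux.third_cond x⟩
end

section
/- Let 𝒜 = (ℤ; s) be the structure on the integers in the language with one unary function symbol interpreted as the successor function s(z) = z + 1, and let ℬ = (ℤ; s, p) be the structure on the integers in the language with two unary function symbols interpreted as successor and predecessor p(z) = z − 1. Then: (i) the pair of identity maps (id, id) is a semi-retraction between 𝒜 and ℬ; and (ii) 𝒜 does not have the Ramsey property: letting A = B be the substructure of 𝒜 generated by {0} (whose underlying set is the set of nonnegative integers), there is a 2-coloring c of the set of substructures of 𝒜 isomorphic to A (namely, coloring the copy with least element a by the parity of a) such that no substructure B' of 𝒜 isomorphic to B has c constant on the copies of A contained in B'. Hence (A, B) is not a Ramsey duo for 𝒜, showing that local finiteness of 𝒜 cannot be dropped from the semi-retraction transfer theorems. -/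
open FirstOrder FirstOrder.Language

/-- The language with one unary function symbol (successor). -/
inductive SuccFunc : ℕ → Type
  | s : SuccFunc 1

def Lsucc : FirstOrder.Language :=
  ⟨SuccFunc, fun _ => Empty⟩

/-- The structure `𝒜 = (ℤ; s)` with `s(z) = z + 1`. -/
instance zsuccStructure : Lsucc.Structure ℤ where
  funMap {n} f x := match f with | .s => x 0 + 1
  RelMap {n} r _ := r.elim

/-- The language with two unary function symbols (successor and predecessor). -/
inductive SPFunc : ℕ → Type
  | s : SPFunc 1
  | p : SPFunc 1

def Lsp : FirstOrder.Language :=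
  ⟨SPFunc, fun _ => Empty⟩

/-- The structure `ℬ = (ℤ; s, p)` with `s(z) = z + 1` and `p(z) = z - 1`. -/
instance zspStructure : Lsp.Structure ℤ where
  funMap {n} f x := match f with | .s => x 0 + 1 | .p => x 0 - 1
  RelMap {n} r _ := r.elim


section Aux
open FirstOrder FirstOrder.Language

/-- Every `Lsucc`-term is a variable plus a natural number shift. -/
lemma lsucc_term_form {α : Type*} (t : Lsucc.Term α) :
    ∃ (i : α) (k : ℕ), ∀ v : α → ℤ, t.realize v = v i + k := by
  induction t with
  | var i => exact ⟨i, 0, fun v => by simp⟩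
  | @func m f ts ih =>
    cases f with
    | s =>
      obtain ⟨i, k, h⟩ := ih 0
      refine ⟨i, k + 1, fun v => ?_⟩
      show (ts 0).realize v + 1 = _
      rw [h]; push_cast; ring

/-- Every `Lsp`-term is a variable plus an integer shift. -/
lemma lsp_term_form {α : Type*} (t : Lsp.Term α) :
    ∃ (i : α) (k : ℤ), ∀ v : α → ℤ, t.realize v = v i + k := by
  induction t with
  | var i => exact ⟨i, 0, fun v => by simp⟩
  | @func m f ts ih =>
    cases f with
    | s =>
      obtain ⟨i, k, h⟩ := ih 0
      exact ⟨i, k + 1, fun v => by show (ts 0).realize v + 1 = _; rw [h]; ring⟩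
    | p =>
      obtain ⟨i, k, h⟩ := ih 0
      exact ⟨i, k - 1, fun v => by show (ts 0).realize v - 1 = _; rw [h]; ring⟩

end Aux
section Aux2
open FirstOrder FirstOrder.Language

/-- qf formulas can't distinguish tuples with the same pairwise differences (Lsucc). -/
lemma sameQfType_succ_of_diff {n : ℕ} {x y : Fin n → ℤ}
    (hd : ∀ i j, x i - x j = y i - y j) : SameQfType Lsucc ℤ x y := by
  intro φ hφ
  have key : ∀ (ψ : Lsucc.BoundedFormula (Fin n) 0), ψ.IsQF →
      ∀ xs : Fin 0 → ℤ, (ψ.Realize x xs ↔ ψ.Realize y xs) := by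
    intro ψ hψ
    induction hψ with
    | falsum => intro xs; simp [BoundedFormula.Realize]
    | of_isAtomic h =>
      cases h with
      | equal t₁ t₂ =>
        intro xs
        obtain ⟨i, k, hi⟩ := lsucc_term_form t₁
        obtain ⟨j, m, hj⟩ := lsucc_term_form t₂
        rw [BoundedFormula.realize_bdEqual, BoundedFormula.realize_bdEqual, hi, hj, hi, hj]
        cases i with
        | inl i =>
          cases j with
          | inl j => simp only [Sum.elim_inl]; have := hd i j; omega
          | inr j => exact j.elim0
        | inr i => exact i.elim0
      | rel R ts => exact R.elim
    | imp h₁ h₂ ih₁ ih₂ =>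
      intro xs
      simp only [BoundedFormula.realize_imp, ih₁ xs, ih₂ xs]
  exact key φ hφ _

lemma sameQfType_sp_of_diff {n : ℕ} {x y : Fin n → ℤ}
    (hd : ∀ i j, x i - x j = y i - y j) : SameQfType Lsp ℤ x y := by
  intro φ hφ
  have key : ∀ (ψ : Lsp.BoundedFormula (Fin n) 0), ψ.IsQF →
      ∀ xs : Fin 0 → ℤ, (ψ.Realize x xs ↔ ψ.Realize y xs) := by
    intro ψ hψ
    induction hψ with
    | falsum => intro xs; simp [BoundedFormula.Realize]
    | of_isAtomic h =>
      cases h with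
      | equal t₁ t₂ =>
        intro xs
        obtain ⟨i, k, hi⟩ := lsp_term_form t₁
        obtain ⟨j, m, hj⟩ := lsp_term_form t₂
        rw [BoundedFormula.realize_bdEqual, BoundedFormula.realize_bdEqual, hi, hj, hi, hj]
        cases i with
        | inl i =>
          cases j with
          | inl j => simp only [Sum.elim_inl]; have := hd i j; omega
          | inr j => exact j.elim0
        | inr i => exact i.elim0
      | rel R ts => exact R.elim
    | imp h₁ h₂ ih₁ ih₂ =>
      intro xs
      simp only [BoundedFormula.realize_imp, ih₁ xs, ih₂ xs]
  exact key φ hφ _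

end Aux2
section Aux3
open FirstOrder FirstOrder.Language

/-- Iterated successor term in `Lsucc`. -/
def succTerm {α : Type*} : ℕ → Lsucc.Term α → Lsucc.Term α
  | 0, t => t
  | k + 1, t => Term.func SuccFunc.s (fun _ => succTerm k t)

lemma realize_succTerm {α : Type*} (k : ℕ) (t : Lsucc.Term α) (v : α → ℤ) :
    (succTerm k t).realize v = t.realize v + k := by
  induction k with
  | zero => simp [succTerm]
  | succ k ih =>
    show (succTerm k t).realize v + 1 = _
    rw [ih]; push_cast; ring

/-- Iterated successor term in `Lsp`. -/
def spSuccTerm {α : Type*} : ℕ → Lsp.Term α → Lsp.Term α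
  | 0, t => t
  | k + 1, t => Term.func SPFunc.s (fun _ => spSuccTerm k t)

lemma realize_spSuccTerm {α : Type*} (k : ℕ) (t : Lsp.Term α) (v : α → ℤ) :
    (spSuccTerm k t).realize v = t.realize v + k := by
  induction k with
  | zero => simp [spSuccTerm]
  | succ k ih =>
    show (spSuccTerm k t).realize v + 1 = _
    rw [ih]; push_cast; ring

lemma diff_of_sameQfType_succ {n : ℕ} {x y : Fin n → ℤ}
    (h : SameQfType Lsucc ℤ x y) (i j : Fin n) : x i - x j = y i - y j := by
  set d : ℤ := x i - x j with hd
  set k : ℕ := (-d).toNat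
  set m : ℕ := d.toNat
  have hφ := h (Term.equal (succTerm k (Term.var i)) (succTerm m (Term.var j)))
    (BoundedFormula.IsAtomic.equal _ _).isQF
  rw [Formula.realize_equal, Formula.realize_equal] at hφ
  simp only [realize_succTerm, Term.realize_var] at hφ
  omega

lemma diff_of_sameQfType_sp {n : ℕ} {x y : Fin n → ℤ}
    (h : SameQfType Lsp ℤ x y) (i j : Fin n) : x i - x j = y i - y j := by
  set d : ℤ := x i - x j with hd
  set k : ℕ := (-d).toNat
  set m : ℕ := d.toNat
  have hφ := h (Term.equal (spSuccTerm k (Term.var i)) (spSuccTerm m (Term.var j)))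
    (BoundedFormula.IsAtomic.equal _ _).isQF
  rw [Formula.realize_equal, Formula.realize_equal] at hφ
  simp only [realize_spSuccTerm, Term.realize_var] at hφ
  omega

end Aux3
section Aux4
open FirstOrder FirstOrder.Language

/-- The substructure of `(ℤ; s)` with carrier `Set.Ici a`. -/
def iciSub (a : ℤ) : Lsucc.Substructure ℤ where
  carrier := Set.Ici a
  fun_mem := by
    intro n f x hx
    cases f
    have := hx 0
    show x 0 + 1 ∈ Set.Ici a
    simp only [Set.mem_Ici] at *
    omega

@[simp] lemma mem_iciSub {a z : ℤ} : z ∈ iciSub a ↔ a ≤ z := Iff.rfl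

lemma succ_mem_of_mem (S : Lsucc.Substructure ℤ) {z : ℤ} (hz : z ∈ S) : z + 1 ∈ S :=
  S.fun_mem SuccFunc.s (fun _ => z) (fun _ => hz)

lemma up_closed (S : Lsucc.Substructure ℤ) {z w : ℤ} (hz : z ∈ S) (hzw : z ≤ w) : w ∈ S := by
  have key : ∀ k : ℕ, z + k ∈ S := by
    intro k
    induction k with
    | zero => simpa using hz
    | succ k ih =>
      have h1 : z + ((k + 1 : ℕ) : ℤ) = (z + k) + 1 := by push_cast; ring
      rw [h1]
      exact succ_mem_of_mem S ih
  have := key (w - z).toNat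
  have h2 : z + ((w - z).toNat : ℤ) = w := by omega
  rwa [h2] at this

lemma closureZeroEq : ((Substructure.closure Lsucc {(0 : ℤ)} : Lsucc.Substructure ℤ) : Set ℤ)
    = Set.Ici (0 : ℤ) := by
  apply le_antisymm
  · have : Substructure.closure Lsucc {(0 : ℤ)} ≤ iciSub 0 :=
      Substructure.closure_le.mpr (by intro z hz; simp_all)
    exact this
  · intro z hz
    simp only [Set.mem_Ici] at hz
    exact up_closed _ (Substructure.subset_closure (by simp)) hz

lemma mem_closure_zero {z : ℤ} :
    z ∈ (Substructure.closure Lsucc {(0 : ℤ)} : Lsucc.Substructure ℤ) ↔ 0 ≤ z := by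
  have := Set.ext_iff.mp closureZeroEq z
  simpa using this

/-- The shift isomorphism between `Ici a` and the closure of `{0}`. -/
noncomputable def shiftEquiv (a : ℤ) :
    (iciSub a) ≃[Lsucc] (Substructure.closure Lsucc {(0 : ℤ)} : Lsucc.Substructure ℤ) where
  toFun z := ⟨z.1 - a, mem_closure_zero.mpr (by have := z.2; rw [mem_iciSub] at this; omega)⟩
  invFun z := ⟨z.1 + a, mem_iciSub.mpr (by have := mem_closure_zero.mp z.2; omega)⟩
  left_inv z := by simp
  right_inv z := by simp
  map_fun' := by
    intro n f x
    cases f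
    apply Subtype.ext
    show ((x 0 : ℤ) + 1) - a = ((x 0 : ℤ) - a) + 1
    ring
  map_rel' := by intro n r; exact r.elim

end Aux4
@[simp] lemma iciSub_coe (a : ℤ) : ((iciSub a : Lsucc.Substructure ℤ) : Set ℤ) = Set.Ici a := rfl

/-- Example 5.6 / `notlocfin`: (i) the identity maps form a semi-retraction
between `𝒜 = (ℤ; s)` and `ℬ = (ℤ; s, p)`; and (ii) `𝒜` fails the Ramsey property: with
`A = B = ⟨0⟩_𝒜` (whose underlying set is the set of nonnegative integers), there is a
2-coloring of the copies of `A` in `𝒜` on which no copy of `B` is homogeneous, i.e. `(A, B)` is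
not a Ramsey duo for `𝒜`.  Hence local finiteness cannot be dropped from the semi-retraction
transfer theorems. -/
theorem identity_semiRetraction_int_succ_and_RP_failure :
    IsSemiRetraction Lsucc Lsp ℤ ℤ id id ∧
    ((Substructure.closure Lsucc {(0 : ℤ)} : Lsucc.Substructure ℤ) : Set ℤ)
        = Set.Ici (0 : ℤ) ∧
    ¬ ArrowSub Lsucc ℤ (Substructure.closure Lsucc {(0 : ℤ)})
        (Substructure.closure Lsucc {(0 : ℤ)}) 2 1 := by
  classical
  refine ⟨⟨⟨fun a b h => h,
      fun n x y h => sameQfType_sp_of_diff (fun i j => diff_of_sameQfType_succ h i j)⟩,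
      ⟨fun a b h => h,
      fun n x y h => sameQfType_succ_of_diff (fun i j => diff_of_sameQfType_sp h i j)⟩,
      fun n x φ hφ => Iff.rfl⟩, closureZeroEq, ?_⟩
  intro har
  set c : Lsucc.Substructure ℤ → Fin 2 :=
    fun S => if ∃ a : ℤ, Even a ∧ (S : Set ℤ) = Set.Ici a then 0 else 1 with hc
  obtain ⟨B', ⟨e⟩, hcard⟩ := har c
  obtain ⟨b, hb⟩ : ∃ b : ℤ, b ∈ B' :=
    ⟨(e.symm ⟨0, mem_closure_zero.mpr le_rfl⟩ : B'), (e.symm ⟨0, mem_closure_zero.mpr le_rfl⟩).2⟩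
  have h1 : iciSub b ≤ B' := fun z hz => up_closed B' hb (mem_iciSub.mp hz)
  have h2 : iciSub (b + 1) ≤ B' := fun z hz => up_closed B' hb
    (by have := mem_iciSub.mp hz; omega)
  have m1 : iciSub b ∈ {A' : Lsucc.Substructure ℤ | A' ≤ B' ∧
      Nonempty (A' ≃[Lsucc] (Substructure.closure Lsucc {(0 : ℤ)}))} := ⟨h1, ⟨shiftEquiv b⟩⟩
  have m2 : iciSub (b + 1) ∈ {A' : Lsucc.Substructure ℤ | A' ≤ B' ∧
      Nonempty (A' ≃[Lsucc] (Substructure.closure Lsucc {(0 : ℤ)}))} := ⟨h2, ⟨shiftEquiv (b + 1)⟩⟩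
  have hcval : ∀ t : ℤ, c (iciSub t) = if Even t then 0 else 1 := by
    intro t
    by_cases h : Even t
    · rw [hc]
      simp only [if_pos h]
      rw [if_pos ⟨t, h, by simp⟩]
    · rw [hc]
      simp only [if_neg h]
      rw [if_neg]
      rintro ⟨a, ha, heq⟩
      rw [iciSub_coe] at heq
      exact h (Set.Ici_injective heq ▸ ha)
  have hne : c (iciSub b) ≠ c (iciSub (b + 1)) := by
    rw [hcval, hcval]
    rcases Int.even_or_odd b with h | h
    · rw [if_pos h, if_neg (by simpa [Int.even_add_one] using h)]; decide
    · have hne' : ¬ Even b := by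
        rw [← Int.not_odd_iff_even]; simpa using h
      rw [if_neg hne', if_pos (by simpa [Int.even_add_one] using hne')]
      decide
  have hsub : ({c (iciSub b), c (iciSub (b + 1))} : Set (Fin 2)) ⊆
      c '' {A' : Lsucc.Substructure ℤ | A' ≤ B' ∧
        Nonempty (A' ≃[Lsucc] (Substructure.closure Lsucc {(0 : ℤ)}))} := by
    rintro z (rfl | rfl)
    · exact ⟨_, m1, rfl⟩
    · exact ⟨_, m2, rfl⟩
  have h2le : 2 ≤ (c '' {A' : Lsucc.Substructure ℤ | A' ≤ B' ∧
      Nonempty (A' ≃[Lsucc] (Substructure.closure Lsucc {(0 : ℤ)}))}).ncard := by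
    have := Set.ncard_le_ncard hsub (Set.toFinite _)
    rwa [Set.ncard_pair hne] at this
  omega
end

section
/- Let 𝒜 be a locally finite L-structure and ℬ a locally finite L'-structure such that each of L and L' contains a binary relation symbol interpreted in the respective structure as a linear order of its domain. Suppose 𝒜 is a semi-retract of ℬ and ℬ has the Ramsey property (for every pair of finitely generated substructures A₀, B₀ of ℬ and every integer r ≥ 2, ℬ → (B₀)^{A₀}_r). Then 𝒜 has the Ramsey property: for every pair of finite substructures A, B of 𝒜 and every integer r ≥ 2, 𝒜 → (B)^A_r. -/
open FirstOrder FirstOrder.Language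

namespace SemiRetractAux

open FirstOrder.Language.Substructure Set

variable {L : FirstOrder.Language} {M : Type*} [L.Structure M]

theorem sameQfType_symm {n : ℕ} {x y : Fin n → M} (h : SameQfType L M x y) :
    SameQfType L M y x := fun φ hφ => (h φ hφ).symm

theorem sameQfType_trans {n : ℕ} {x y z : Fin n → M} (h1 : SameQfType L M x y)
    (h2 : SameQfType L M y z) : SameQfType L M x z := fun φ hφ => (h1 φ hφ).trans (h2 φ hφ)

theorem realize_qf_emb {N : Type*} [L.Structure N] (e : M ↪[L] N) {α : Type*} {k : ℕ}
    {φ : L.BoundedFormula α k} (hφ : φ.IsQF) (v : α → M) (xs : Fin k → M) :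
    φ.Realize (⇑e ∘ v) (⇑e ∘ xs) ↔ φ.Realize v xs := by
  induction hφ with
  | falsum => exact Iff.rfl
  | of_isAtomic h =>
    cases h with
    | equal t₁ t₂ =>
      simp only [BoundedFormula.realize_bdEqual, ← Sum.comp_elim, HomClass.realize_term]
      exact e.injective.eq_iff
    | rel R ts =>
      simp only [BoundedFormula.realize_rel, ← Sum.comp_elim, HomClass.realize_term]
      exact StrongHomClass.map_rel e R _
  | imp _ _ ih₁ ih₂ => simp only [BoundedFormula.realize_imp, ih₁, ih₂]

theorem realize_qf_emb_formula {N : Type*} [L.Structure N] (e : M ↪[L] N) {α : Type*}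
    {φ : L.Formula α} (hφ : φ.IsQF) (x : α → M) :
    φ.Realize (⇑e ∘ x) ↔ φ.Realize x := by
  have h := realize_qf_emb e hφ x default
  rwa [Subsingleton.elim (⇑e ∘ (default : Fin 0 → M)) default] at h

theorem sameQfType_val_emb {S : L.Substructure M} (e : S ↪[L] M) {n : ℕ} (u : Fin n → S) :
    SameQfType L M (fun i => (u i : M)) (fun i => e (u i)) := by
  intro φ hφ
  have h1 := realize_qf_emb_formula S.subtype hφ u
  have h2 := realize_qf_emb_formula e hφ u
  exact h1.trans h2.symm

theorem sameQfType_val_equiv {S T : L.Substructure M} (ι : S ≃[L] T) {n : ℕ} (u : Fin n → S) :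
    SameQfType L M (fun i => (u i : M)) (fun i => (ι (u i) : M)) := by
  intro φ hφ
  have h1 := realize_qf_emb_formula S.subtype hφ u
  have h2 : φ.Realize (⇑ι ∘ u) ↔ φ.Realize u := StrongHomClass.realize_formula ι φ
  have h3 := realize_qf_emb_formula T.subtype hφ (⇑ι ∘ u)
  exact h1.trans (h2.symm.trans h3.symm)

theorem term_realize_mem_closure {n : ℕ} (v : Fin n → M) (t : L.Term (Fin n)) :
    t.realize v ∈ closure L (Set.range v) := by
  induction t with
  | var i => exact subset_closure (Set.mem_range_self i)
  | func f ts ih =>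
    simp only [Term.realize]
    exact (closure L (Set.range v)).fun_mem f _ (fun i => ih i)

theorem mem_closure_fin {n : ℕ} {v : Fin n → M} {x : M} :
    x ∈ closure L (Set.range v) ↔ ∃ t : L.Term (Fin n), t.realize v = x := by
  classical
  constructor
  · intro hx
    obtain ⟨t, ht⟩ := mem_closure_iff_exists_term.mp hx
    refine ⟨t.relabel (fun s => s.2.choose), ?_⟩
    rw [Term.realize_relabel, ← ht]
    congr 1
    funext s
    exact s.2.choose_spec
  · rintro ⟨t, rfl⟩
    exact term_realize_mem_closure v t

theorem sameQf_term_eq {n : ℕ} {a b : Fin n → M} (h : SameQfType L M a b)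
    (t₁ t₂ : L.Term (Fin n)) (ht : t₁.realize a = t₂.realize a) :
    t₁.realize b = t₂.realize b := by
  have h' := h (t₁.equal t₂) ((BoundedFormula.IsAtomic.equal _ _).isQF)
  simp only [Formula.realize_equal] at h'
  exact h'.mp ht

theorem sameQf_rel {n : ℕ} {a b : Fin n → M} (h : SameQfType L M a b) {m : ℕ}
    (R : L.Relations m) (ts : Fin m → L.Term (Fin n)) :
    (Structure.RelMap R (fun i => (ts i).realize a) ↔
      Structure.RelMap R (fun i => (ts i).realize b)) := by
  have h' := h (R.formula ts) ((BoundedFormula.IsAtomic.rel _ _).isQF)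
  simpa only [Formula.realize_rel] using h'

end SemiRetractAux

namespace SemiRetractAux

open FirstOrder FirstOrder.Language FirstOrder.Language.Substructure Set

variable {L : FirstOrder.Language} {M : Type*} [L.Structure M]

theorem exists_closure_equiv {n : ℕ} {a b : Fin n → M} (h : SameQfType L M a b) :
    ∃ e : (closure L (Set.range a)) ≃[L] (closure L (Set.range b)),
      ∀ (t : L.Term (Fin n)) (ht : t.realize a ∈ closure L (Set.range a)),
        ((e ⟨t.realize a, ht⟩ : closure L (Set.range b)) : M) = t.realize b := by
  classical
  have repA : ∀ x : closure L (Set.range a), ∃ t : L.Term (Fin n), t.realize a = (x : M) :=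
    fun x => mem_closure_fin.mp x.2
  choose TA hTA using repA
  have repB : ∀ x : closure L (Set.range b), ∃ t : L.Term (Fin n), t.realize b = (x : M) :=
    fun x => mem_closure_fin.mp x.2
  choose TB hTB using repB
  set F : closure L (Set.range a) → closure L (Set.range b) :=
    fun x => ⟨(TA x).realize b, term_realize_mem_closure b (TA x)⟩ with hF
  set G : closure L (Set.range b) → closure L (Set.range a) :=
    fun x => ⟨(TB x).realize a, term_realize_mem_closure a (TB x)⟩ with hG
  have hFspec : ∀ (t : L.Term (Fin n)) (x : closure L (Set.range a)),
      (x : M) = t.realize a → (F x : M) = t.realize b := by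
    intro t x hx
    exact sameQf_term_eq h (TA x) t ((hTA x).trans hx)
  have hGspec : ∀ (t : L.Term (Fin n)) (x : closure L (Set.range b)),
      (x : M) = t.realize b → (G x : M) = t.realize a :=
    fun t x hx => sameQf_term_eq (sameQfType_symm h) (TB x) t ((hTB x).trans hx)
  have hGF : ∀ x, G (F x) = x := by
    intro x
    apply Subtype.ext
    have h1 : (F x : M) = (TA x).realize b := hFspec (TA x) x (hTA x).symm
    exact (hGspec (TA x) (F x) h1).trans (hTA x)
  have hFG : ∀ x, F (G x) = x := by
    intro x
    apply Subtype.ext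
    exact (hFspec (TB x) (G x) (hGspec (TB x) x (hTB x).symm)).trans (hTB x)
  refine ⟨{ toEquiv := ⟨F, G, hGF, hFG⟩, map_fun' := ?_, map_rel' := ?_ }, ?_⟩
  · intro m f x
    apply Subtype.ext
    have hv : ((Structure.funMap f x : closure L (Set.range a)) : M) =
        (Term.func f (fun i => TA (x i))).realize a := by
      show Structure.funMap f (fun i => ((x i : M))) = _
      simp only [Term.realize]
      congr 1
      funext i
      exact (hTA (x i)).symm
    have h1 := hFspec _ _ hv
    show (F (Structure.funMap f x) : M) = _
    rw [h1]
    show (Term.func f fun i => TA (x i)).realize b = Structure.funMap f (fun i => ((F (x i) : M)))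
    simp only [Term.realize]
    rfl
  · intro m r x
    show Structure.RelMap r (fun i => ((F (x i) : M))) ↔ Structure.RelMap r (fun i => ((x i : M)))
    have h1 : (fun i => ((F (x i)) : M)) = fun i => (TA (x i)).realize b :=
      funext fun i => hFspec _ _ (hTA (x i)).symm
    have h2 : (fun i => ((x i) : M)) = fun i => (TA (x i)).realize a :=
      funext fun i => (hTA (x i)).symm
    rw [h1, h2]
    exact (sameQf_rel h r (fun i => TA (x i))).symm
  · intro t ht
    exact hFspec t ⟨t.realize a, ht⟩ rfl

theorem emb_unique {N : Type*} [L.Structure N]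
    (R : L.Relations 2) (hR : IsLinearOrder N fun x y => Structure.RelMap R ![x, y])
    {S : L.Substructure N} (hfin : (S : Set N).Finite)
    (e₁ e₂ : S ↪[L] N) (hr : e₁.toHom.range = e₂.toHom.range) : e₁ = e₂ := by
  classical
  haveI : Finite S := hfin.to_subtype
  have hsub : ∀ x : S, ∃ y : S, e₂ y = e₁ x := by
    intro x
    have hx : e₁ x ∈ e₂.toHom.range := by
      rw [← hr]
      exact ⟨x, rfl⟩
    obtain ⟨y, hy⟩ := hx
    exact ⟨y, hy⟩
  choose τ hτ using hsub
  have hinj : Function.Injective τ := fun x y hxy => e₁.injective (by rw [← hτ x, ← hτ y, hxy])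
  have hbij : Function.Bijective τ := Finite.injective_iff_bijective.mp hinj
  have pair : ∀ {β : Type _} (f : S → β) (x y : S), (f ∘ (![x, y] : Fin 2 → S)) = ![f x, f y] := by
    intro β f x y
    funext i
    fin_cases i <;> rfl
  have hrel : ∀ x y : S, (Structure.RelMap R ![(τ x : N), (τ y : N)] ↔
      Structure.RelMap R ![(x : N), (y : N)]) := by
    intro x y
    have h1 := e₂.map_rel R ![τ x, τ y]
    have h2 := e₁.map_rel R ![x, y]
    rw [pair ⇑e₂ (τ x) (τ y)] at h1
    rw [pair ⇑e₁ x y] at h2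
    rw [hτ x, hτ y] at h1
    have hS1 : Structure.RelMap R (![τ x, τ y] : Fin 2 → S) =
        Structure.RelMap R ![(τ x : N), (τ y : N)] := by
      show Structure.RelMap R (fun i => (((![τ x, τ y] : Fin 2 → S) i : S) : N)) = _
      rw [show (fun i => (((![τ x, τ y] : Fin 2 → S) i : S) : N)) = ![(τ x : N), (τ y : N)] from
        pair (fun z : S => (z : N)) (τ x) (τ y)]
    have hS2 : Structure.RelMap R (![x, y] : Fin 2 → S) =
        Structure.RelMap R ![(x : N), (y : N)] := by
      show Structure.RelMap R (fun i => (((![x, y] : Fin 2 → S) i : S) : N)) = _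
      rw [show (fun i => (((![x, y] : Fin 2 → S) i : S) : N)) = ![(x : N), (y : N)] from
        pair (fun z : S => (z : N)) x y]
    rw [hS1] at h1
    rw [hS2] at h2
    exact h1.symm.trans h2
  haveI := hR
  letI : LinearOrder S :=
    { le := fun x y => Structure.RelMap R ![(x : N), (y : N)],
      le_refl := fun a => refl_of (fun x y : N => Structure.RelMap R ![x, y]) _,
      le_trans := fun a b c hab hbc =>
        _root_.trans_of (fun x y : N => Structure.RelMap R ![x, y]) hab hbc,
      le_antisymm := fun a b hab hba =>
        Subtype.ext (antisymm_of (fun x y : N => Structure.RelMap R ![x, y]) hab hba),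
      le_total := fun a b => total_of (fun x y : N => Structure.RelMap R ![x, y]) _ _,
      toDecidableLE := fun a b => Classical.dec _ }
  let σ : S ≃o S := { toEquiv := Equiv.ofBijective τ hbij, map_rel_iff' := @fun a b => hrel a b }
  have hσ : σ = OrderIso.refl S := Subsingleton.elim _ _
  have hτid : ∀ x, τ x = x := by
    intro x
    have := congrArg (fun (e : S ≃o S) => e x) hσ
    exact this
  apply FirstOrder.Language.Embedding.ext
  intro x
  rw [← hτ x, hτid x]

end SemiRetractAux


/-- Corollary 2.31 / `transfer`: if `𝒜` and `ℬ` are locally finite structures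
each carrying a distinguished linear order given by a binary relation symbol of its language,
`𝒜` is a semi-retract of `ℬ`, and `ℬ` has the Ramsey property, then `𝒜` has the Ramsey
property. -/
theorem semiRetraction_transfers_RP_ordered
    {L L' : FirstOrder.Language} {M N : Type*} [L.Structure M] [L'.Structure N]
    (hlfA : StructLocallyFinite L M) (hlfB : StructLocallyFinite L' N)
    (hordA : ∃ R : L.Relations 2, IsLinearOrder M fun x y => Structure.RelMap R ![x, y])
    (hordB : ∃ R : L'.Relations 2, IsLinearOrder N fun x y => Structure.RelMap R ![x, y])
    (hsr : ∃ (g : M → N) (f : N → M), IsSemiRetraction L L' M N g f)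
    (hRP : ∀ A₀ B₀ : L'.Substructure N, A₀.FG → B₀.FG → ∀ r : ℕ, 2 ≤ r →
      ArrowSub L' N A₀ B₀ r 1) :
    ∀ A B : L.Substructure M, (A : Set M).Finite → (B : Set M).Finite → ∀ r : ℕ, 2 ≤ r →
      ArrowSub L M A B r 1 := by
  classical
  obtain ⟨R', hR'⟩ := hordB
  obtain ⟨g, f, hg, hf, hgf⟩ := hsr
  intro A B hA hB r hr c
  obtain ⟨n, abar, -, hab⟩ := hA.fin_param
  obtain ⟨k, mbar, -, hmb⟩ := hB.fin_param
  set Astar := Substructure.closure L' (Set.range (g ∘ abar)) with hAstar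
  set Bstar := Substructure.closure L' (Set.range (g ∘ mbar)) with hBstar
  have hAstarFG : Astar.FG := Substructure.fg_closure (Set.finite_range _)
  have hBstarFG : Bstar.FG := Substructure.fg_closure (Set.finite_range _)
  have hAstarfin : ((Astar : Set N)).Finite := hlfB _ hAstarFG
  have hmemA : ∀ i, g (abar i) ∈ Astar :=
    fun i => Substructure.subset_closure (Set.mem_range_self i)
  have haA : ∀ i, abar i ∈ A := by
    intro i
    rw [← SetLike.mem_coe, ← hab]
    exact Set.mem_range_self i
  have hmB : ∀ i, mbar i ∈ B := by
    intro i
    rw [← SetLike.mem_coe, ← hmb]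
    exact Set.mem_range_self i
  have hmemB : ∀ x, x ∈ B → g x ∈ Bstar := by
    intro x hx
    rw [← SetLike.mem_coe, ← hmb] at hx
    obtain ⟨j, rfl⟩ := hx
    exact Substructure.subset_closure (Set.mem_range_self j)
  -- the induced coloring of embeddings of A* into N
  set cstar : (Astar ↪[L'] N) → Fin r :=
    fun e => c (Substructure.closure L (Set.range (fun i => f (e ⟨g (abar i), hmemA i⟩))))
    with hcstar
  set c' : L'.Substructure N → Fin r :=
    fun S => if hS : ∃ e : Astar ↪[L'] N, e.toHom.range = S then cstar hS.choose
      else (⟨0, by omega⟩ : Fin r) with hc'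
  obtain ⟨B'', ⟨θ⟩, hmono⟩ := hRP Astar Bstar hAstarFG hBstarFG r hr c'
  set hEmb : Bstar ↪[L'] N := (B''.subtype).comp θ.symm.toEmbedding with hhEmb
  set ψ : M → M := fun x => if hx : g x ∈ Bstar then f (hEmb ⟨g x, hx⟩) else x with hψ
  have hψval : ∀ (x : M) (hx : g x ∈ Bstar), ψ x = f (hEmb ⟨g x, hx⟩) := by
    intro x hx
    simp only [hψ, dif_pos hx]
  -- ψ preserves qf-types of tuples from B
  have hψtype : ∀ {p : ℕ} (x : Fin p → M), (∀ i, x i ∈ B) → SameQfType L M x (ψ ∘ x) := by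
    intro p x hx
    have hgx : ∀ i, g (x i) ∈ Bstar := fun i => hmemB _ (hx i)
    have h1 : SameQfType L M x (f ∘ g ∘ x) := hgf p x
    have h2 : SameQfType L' N (fun i => ((⟨g (x i), hgx i⟩ : Bstar) : N))
        (fun i => hEmb ⟨g (x i), hgx i⟩) :=
      SemiRetractAux.sameQfType_val_emb hEmb (fun i => ⟨g (x i), hgx i⟩)
    have h3 := hf.2 p _ _ h2
    have e2 : (f ∘ fun i => hEmb (⟨g (x i), hgx i⟩ : Bstar)) = ψ ∘ x := by
      funext i
      exact (hψval (x i) (hgx i)).symm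
    rw [e2] at h3
    exact SemiRetractAux.sameQfType_trans h1 h3
  have hsame : SameQfType L M mbar (ψ ∘ mbar) := hψtype mbar hmB
  obtain ⟨eB, heB⟩ := SemiRetractAux.exists_closure_equiv hsame
  have hclosB : Substructure.closure L (Set.range mbar) = B := by
    rw [hmb, Substructure.closure_eq]
  set B' := Substructure.closure L (Set.range (ψ ∘ mbar)) with hB'
  refine ⟨B', ⟨hclosB ▸ eB.symm⟩, ?_⟩
  refine le_trans (Set.ncard_le_ncard ?_ (Set.toFinite _)) hmono
  rintro color ⟨A', ⟨hA'le, ⟨ν⟩⟩, rfl⟩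
  set abar' : Fin n → M := fun i => (ν.symm ⟨abar i, haA i⟩ : M) with habar'
  have hA'mem : ∀ i, abar' i ∈ A' := fun i => (ν.symm ⟨abar i, haA i⟩).2
  have hB'mem : ∀ i, abar' i ∈ B' := fun i => hA'le (hA'mem i)
  have hsa : SameQfType L M abar abar' :=
    SemiRetractAux.sameQfType_val_equiv ν.symm (fun i => ⟨abar i, haA i⟩)
  -- extract preimages in B
  have hterm : ∀ i, ∃ t : L.Term (Fin k), t.realize (ψ ∘ mbar) = abar' i :=
    fun i => SemiRetractAux.mem_closure_fin.mp (hB'mem i)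
  choose ts hts using hterm
  set bbar : Fin n → M := fun i => (ts i).realize mbar with hbbar
  have hbB : ∀ i, bbar i ∈ B := by
    intro i
    have h := SemiRetractAux.term_realize_mem_closure mbar (ts i)
    rwa [hclosB] at h
  have hψb : ∀ i, ψ (bbar i) = abar' i := by
    intro i
    set w : Fin (k + 1) → M := Fin.snoc mbar (bbar i) with hw
    have hwB : ∀ j, w j ∈ B := by
      intro j
      refine Fin.lastCases ?_ ?_ j
      · simpa only [hw, Fin.snoc_last] using hbB i
      · intro j'
        simpa only [hw, Fin.snoc_castSucc] using hmB j'
    have hwt := hψtype w hwB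
    have hq := hwt (Term.equal ((ts i).relabel Fin.castSucc) (Term.var (Fin.last k)))
      ((BoundedFormula.IsAtomic.equal _ _).isQF)
    simp only [Formula.realize_equal, Term.realize_relabel, Term.realize_var] at hq
    have hw1 : w ∘ Fin.castSucc = mbar := by
      funext j
      simp only [Function.comp_apply, hw, Fin.snoc_castSucc]
    have hw2 : (ψ ∘ w) ∘ Fin.castSucc = ψ ∘ mbar := by
      funext j
      simp only [Function.comp_apply, hw, Fin.snoc_castSucc]
    have hw3 : (ψ ∘ w) (Fin.last k) = ψ (bbar i) := by
      simp only [Function.comp_apply, hw, Fin.snoc_last]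
    rw [hw1, hw2, hw3] at hq
    have hlhs : (ts i).realize mbar = w (Fin.last k) := by
      simp only [hw, Fin.snoc_last, hbbar]
    have := hq.mp hlhs
    rw [← this, hts i]
  have hψbfun : ψ ∘ bbar = abar' := funext hψb
  have hsb : SameQfType L M abar bbar := by
    have h1 : SameQfType L M bbar abar' := by
      have := hψtype bbar hbB
      rwa [hψbfun] at this
    exact SemiRetractAux.sameQfType_trans hsa (SemiRetractAux.sameQfType_symm h1)
  -- the embedding A* ↪ B*
  have hsg : SameQfType L' N (g ∘ abar) (g ∘ bbar) := hg.2 n abar bbar hsb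
  obtain ⟨ε, hε⟩ := SemiRetractAux.exists_closure_equiv hsg
  have hle : Substructure.closure L' (Set.range (g ∘ bbar)) ≤ Bstar := by
    rw [Substructure.closure_le]
    rintro x ⟨i, rfl⟩
    exact hmemB _ (hbB i)
  set e' : Astar ↪[L'] Bstar := (Substructure.inclusion hle).comp ε.toEmbedding with he'
  set j : Astar ↪[L'] N := hEmb.comp e' with hj
  refine ⟨j.toHom.range, ⟨?_, ⟨j.equivRange.symm⟩⟩, ?_⟩
  · rintro x ⟨y, rfl⟩
    exact (θ.symm (e' y)).2
  · have hrig : ∀ e₀ : Astar ↪[L'] N, e₀.toHom.range = j.toHom.range → e₀ = j :=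
      fun e₀ he₀ => SemiRetractAux.emb_unique R' hR' hAstarfin e₀ j he₀
    have hx : ∃ e : Astar ↪[L'] N, e.toHom.range = j.toHom.range := ⟨j, rfl⟩
    have hcj : c' j.toHom.range = cstar j := by
      simp only [hc', dif_pos hx]
      rw [hrig hx.choose hx.choose_spec]
    rw [hcj]
    show c (Substructure.closure L (Set.range fun i => f (j ⟨g (abar i), hmemA i⟩))) = c A'
    have hval : ∀ i, f (j ⟨g (abar i), hmemA i⟩) = abar' i := by
      intro i
      have h1 : ((e' ⟨g (abar i), hmemA i⟩ : Bstar) : N) = g (bbar i) := by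
        show ((Substructure.inclusion hle) (ε ⟨g (abar i), hmemA i⟩) : N) = g (bbar i)
        have h2 := hε (Term.var i) (hmemA i)
        simp only [Term.realize_var, Function.comp_apply] at h2
        rw [← h2]
        rfl
      have h3 : j ⟨g (abar i), hmemA i⟩ = hEmb ⟨g (bbar i), hmemB _ (hbB i)⟩ := by
        show hEmb (e' ⟨g (abar i), hmemA i⟩) = _
        congr 1
        exact Subtype.ext h1
      rw [h3, ← hψval (bbar i) (hmemB _ (hbB i)), hψb i]
    have hrange : (Set.range fun i => f (j ⟨g (abar i), hmemA i⟩)) = (A' : Set M) := by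
      rw [show (fun i => f (j ⟨g (abar i), hmemA i⟩)) = abar' from funext hval]
      apply Set.Subset.antisymm
      · rintro x ⟨i, rfl⟩
        exact hA'mem i
      · intro x hx
        have hxA : (ν ⟨x, hx⟩ : M) ∈ (A : Set M) := (ν ⟨x, hx⟩).2
        rw [← hab] at hxA
        obtain ⟨i, hi⟩ := hxA
        refine ⟨i, ?_⟩
        have : (⟨abar i, haA i⟩ : A) = ν ⟨x, hx⟩ := Subtype.ext hi
        simp only [habar', this, FirstOrder.Language.Equiv.symm_apply_apply]
    rw [hrange, Substructure.closure_eq]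
end
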